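/- arXiv:2006.15352 — 2 statements merged into one kernel-verified Lean document; each statement's English description precedes it below -/
import Mathlib

section
/- For all complex ξ₁, ξ₂, p, q, η with Re(ξ₁) > 0, Re(ξ₂) > 0, Re(p) > 0, Re(q) > 0 and Re(η) > -1, the extended beta function satisfies the summation formula B_η^{p,q}(ξ₁,ξ₂) = Σ_{l=0}^∞ B_η^{p,q}(ξ₁+l, ξ₂+1). -/
open MeasureTheory Complex
open scoped ENNReal NNReal

/-- The Bessel–Struve kernel function, defined by its power series. -/
noncomputable def besselStruve (η t : ℂ) : ℂ :=
  (Complex.Gamma (η + 1) / (Real.sqrt Real.pi : ℂ)) *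
    ∑' m : ℕ, t ^ m * Complex.Gamma (((m : ℂ) + 1) / 2) /
      ((m.factorial : ℂ) * Complex.Gamma ((m : ℂ) / 2 + η + 1))

/-- The extended beta function `B_η^{p,q}(ξ₁, ξ₂)`. -/
noncomputable def extBeta (η p q ξ₁ ξ₂ : ℂ) : ℂ :=
  ∫ y in (0:ℝ)..1, (y : ℂ) ^ (ξ₁ - 1) * ((1 : ℂ) - (y : ℂ)) ^ (ξ₂ - 1) *
    besselStruve η (-p / (y : ℂ)) * besselStruve η (-q / (1 - (y : ℂ)))

/-- The Pochhammer symbol `(a)_l = Γ(a + l)/Γ(a)`. -/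
noncomputable def poch (a : ℂ) (l : ℕ) : ℂ := Complex.Gamma (a + l) / Complex.Gamma a

/-- The extended Gauss hypergeometric function `F_η^{p,q}(ξ₁, ξ₂; ξ₃; x)`. -/
noncomputable def extF (η p q ξ₁ ξ₂ ξ₃ x : ℂ) : ℂ :=
  ∑' l : ℕ, poch ξ₁ l * extBeta η p q (ξ₂ + l) (ξ₃ - ξ₂) * x ^ l /
    (Complex.betaIntegral ξ₂ (ξ₃ - ξ₂) * (l.factorial : ℂ))

/-- The extended confluent hypergeometric function `Φ_η^{p,q}(ξ₂; ξ₃; x)`. -/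
noncomputable def extPhi (η p q ξ₂ ξ₃ x : ℂ) : ℂ :=
  ∑' l : ℕ, extBeta η p q (ξ₂ + l) (ξ₃ - ξ₂) * x ^ l /
    (Complex.betaIntegral ξ₂ (ξ₃ - ξ₂) * (l.factorial : ℂ))

noncomputable section BSAux

def bsCoef (η z : ℂ) (m : ℕ) : ℂ :=
  z ^ m / m.factorial + z ^ m * m / (2 * (η + 1) * m.factorial)

def bsF (η z : ℂ) (m : ℕ) (x : ℝ) : ℂ :=
  bsCoef η z m * ((x:ℂ) ^ (((m:ℂ) + 1) / 2 - 1) * ((1:ℂ) - x) ^ ((η + 3/2) - 1))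

def bsD (η : ℂ) (x : ℝ) : ℂ := (x:ℂ) ^ (-(1/2) : ℂ) * ((1:ℂ) - x) ^ (η + 1/2)

def bsKernel (η z : ℂ) (x : ℝ) : ℂ :=
  bsD η x *
    ((1 + z * (Real.sqrt x : ℝ) / (2 * (η + 1))) * Complex.exp (z * (Real.sqrt x : ℝ)))

def bsK (η : ℂ) : ℂ := Gamma (η + 2) / ((Real.sqrt Real.pi : ℂ) * Gamma (η + 3/2))

lemma bs_he {η : ℂ} (hη : -1 < η.re) : η + 1 ≠ 0 := by
  intro h
  have := congrArg Complex.re h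
  simp [Complex.add_re] at this
  linarith

lemma bs_hd {η : ℂ} (hη : -1 < η.re) (m : ℕ) : 0 < ((m:ℂ)/2 + η + 1).re := by
  have h2 : (m:ℂ)/2 + η + 1 = (((m:ℝ)/2 + 1 : ℝ) : ℂ) + η := by push_cast; ring
  rw [h2]
  simp only [Complex.add_re, Complex.ofReal_re]
  have hm : (0:ℝ) ≤ (m:ℝ)/2 := by positivity
  linarith

lemma bs_hv {η : ℂ} (hη : -1 < η.re) : 0 < (η + 3/2).re := by
  have h2 : η + 3/2 = ((3/2 : ℝ) : ℂ) + η := by push_cast; ring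
  rw [h2]
  simp only [Complex.add_re, Complex.ofReal_re]
  linarith

lemma bs_hu (m : ℕ) : 0 < (((m:ℂ)+1)/2).re := by
  have h2 : ((m:ℂ)+1)/2 = ((((m:ℝ)+1)/2 : ℝ) : ℂ) := by push_cast; ring
  rw [h2, Complex.ofReal_re]
  positivity

lemma bs_termwise {η : ℂ} (hη : -1 < η.re) (z : ℂ) (m : ℕ) :
    Gamma (η+1) / (Real.sqrt Real.pi : ℂ) *
      (z ^ m * Gamma (((m:ℂ)+1)/2) / ((m.factorial : ℂ) * Gamma ((m:ℂ)/2 + η + 1))) =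
    bsK η * (bsCoef η z m *
      (Gamma (((m:ℂ)+1)/2) * Gamma (η + 3/2) / Gamma ((((m:ℂ)+1)/2) + (η + 3/2)))) := by
  have he : η + 1 ≠ 0 := bs_he hη
  have hd0 : ((m:ℂ)/2 + η + 1) ≠ 0 := by
    intro h; have := bs_hd hη m; rw [h] at this; simp at this
  have hG1 : Gamma ((m:ℂ)/2 + η + 1) ≠ 0 := Gamma_ne_zero_of_re_pos (bs_hd hη m)
  have hG2 : Gamma (η + 3/2) ≠ 0 := Gamma_ne_zero_of_re_pos (bs_hv hη)
  have hπ : (Real.sqrt Real.pi : ℂ) ≠ 0 :=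
    Complex.ofReal_ne_zero.2 (by positivity)
  have hf : ((m.factorial : ℕ) : ℂ) ≠ 0 := Nat.cast_ne_zero.2 m.factorial_ne_zero
  have hcoef : bsCoef η z m = z ^ m * (2*(η+1) + m) / (2*(η+1)*(m.factorial : ℂ)) := by
    unfold bsCoef
    field_simp
  rw [hcoef]
  unfold bsK
  rw [show η + 2 = (η + 1) + 1 by ring, Gamma_add_one _ he,
    show (((m:ℂ)+1)/2) + (η + 3/2) = ((m:ℂ)/2 + η + 1) + 1 by ring,
    Gamma_add_one _ hd0]
  simp only [div_mul_div_comm]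
  rw [div_eq_div_iff (by apply_rules [mul_ne_zero]) (by apply_rules [mul_ne_zero] <;> norm_num)]
  ring

lemma summable_nat_mul_pow_div_factorial (r : ℝ) :
    Summable (fun m : ℕ => (m:ℝ) * r^m / m.factorial) := by
  apply (summable_nat_add_iff 1).1
  have h := (Real.summable_pow_div_factorial r).mul_left r
  refine h.congr fun n => ?_
  rw [Nat.factorial_succ]
  have h1 : ((n:ℝ)+1) ≠ 0 := by positivity
  have h2 : ((n.factorial : ℝ)) ≠ 0 := by positivity
  push_cast
  field_simp
  ring

lemma bsCoef_norm_eq (η z : ℂ) (m : ℕ) :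
    ‖z ^ m * m / (2*(η+1)*(m.factorial:ℂ))‖ = ‖z‖^m * m / (2*‖η+1‖*m.factorial) := by
  rw [norm_div, norm_mul, norm_pow, norm_mul, norm_mul, Complex.norm_natCast,
    Complex.norm_natCast]
  norm_num

lemma bs_summable_aux (η : ℂ) (r : ℝ) :
    Summable (fun m : ℕ => r^m * m / (2*‖η+1‖*m.factorial)) := by
  rcases eq_or_ne (η+1) 0 with h | h
  · simp [h]
  · have hn : (0:ℝ) < ‖η+1‖ := norm_pos_iff.2 h
    refine ((summable_nat_mul_pow_div_factorial r).mul_right (1/(2*‖η+1‖))).congr fun m => ?_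
    have hf : ((m.factorial : ℝ)) ≠ 0 := by positivity
    field_simp

lemma bsCoef_norm_summable (η z : ℂ) : Summable (fun m => ‖bsCoef η z m‖) := by
  have h1 : Summable (fun m : ℕ => ‖z‖^m / m.factorial) := Real.summable_pow_div_factorial _
  have h2 := bs_summable_aux η ‖z‖
  apply Summable.of_nonneg_of_le (fun m => norm_nonneg _) _ (h1.add h2)
  intro m
  unfold bsCoef
  refine (norm_add_le _ _).trans ?_
  rw [norm_div, norm_pow, Complex.norm_natCast, bsCoef_norm_eq]

lemma bsD_eq (η : ℂ) :
    (fun x:ℝ => (x:ℂ) ^ ((1/2:ℂ) - 1) * ((1:ℂ) - x) ^ ((η + 3/2) - 1)) = bsD η := by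
  funext x
  unfold bsD
  rw [show (1/2:ℂ) - 1 = -(1/2) by norm_num, show (η + 3/2) - 1 = η + 1/2 by ring]

lemma bs_half_re : (0:ℝ) < ((1/2 : ℂ)).re := by
  rw [show (1/2:ℂ) = ((1/2:ℝ):ℂ) by norm_num, Complex.ofReal_re]
  norm_num

lemma bsD_integrableOn {η : ℂ} (hη : -1 < η.re) :
    IntegrableOn (bsD η) (Set.Ioc (0:ℝ) 1) := by
  have h := Complex.betaIntegral_convergent (u := 1/2) (v := η + 3/2) bs_half_re (bs_hv hη)
  have h' := (intervalIntegrable_iff_integrableOn_Ioc_of_le (by norm_num : (0:ℝ) ≤ 1)).1 h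
  rwa [bsD_eq] at h'

lemma bsF_integrableOn {η : ℂ} (hη : -1 < η.re) (z : ℂ) (m : ℕ) :
    IntegrableOn (bsF η z m) (Set.Ioc (0:ℝ) 1) := by
  have h := Complex.betaIntegral_convergent (u := ((m:ℂ)+1)/2) (v := η + 3/2) (bs_hu m) (bs_hv hη)
  have h' := (intervalIntegrable_iff_integrableOn_Ioc_of_le (by norm_num : (0:ℝ) ≤ 1)).1 h
  unfold bsF
  exact h'.const_mul _

lemma bsF_norm_le {η : ℂ} (z : ℂ) (m : ℕ) {x : ℝ} (hx : x ∈ Set.Ioc (0:ℝ) 1) :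
    ‖bsF η z m x‖ ≤ ‖bsCoef η z m‖ * ‖bsD η x‖ := by
  unfold bsF bsD
  rw [norm_mul, norm_mul, norm_mul, show (η + 3/2) - 1 = η + 1/2 by ring]
  refine mul_le_mul_of_nonneg_left (mul_le_mul_of_nonneg_right ?_ (norm_nonneg _)) (norm_nonneg _)
  rw [Complex.norm_cpow_eq_rpow_re_of_pos hx.1,
    Complex.norm_cpow_eq_rpow_re_of_pos hx.1]
  apply Real.rpow_le_rpow_of_exponent_ge hx.1 hx.2
  have e1 : (((m:ℂ)+1)/2 - 1) = ((((m:ℝ)+1)/2 - 1 : ℝ) : ℂ) := by push_cast; ring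
  have e2 : (-(1/2) : ℂ) = ((-(1/2) : ℝ) : ℂ) := by norm_num
  rw [e1, e2, Complex.ofReal_re, Complex.ofReal_re]
  have : (0:ℝ) ≤ (m:ℝ) := Nat.cast_nonneg m
  linarith

end BSAux
section P3
open MeasureTheory Complex
open scoped ENNReal NNReal
variable {η : ℂ}

lemma bsD_lintegral_ne_top (hη : -1 < η.re) :
    ∫⁻ x in Set.Ioc (0:ℝ) 1, ‖bsD η x‖₊ ∂volume ≠ ⊤ :=
  (bsD_integrableOn hη).2.ne

lemma bs_lintegral_sum_ne_top (hη : -1 < η.re) (z : ℂ) :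
    ∑' m : ℕ, ∫⁻ x in Set.Ioc (0:ℝ) 1, ‖bsF η z m x‖₊ ∂volume ≠ ⊤ := by
  have hcoe : (∑' m : ℕ, (‖bsCoef η z m‖₊ : ℝ≥0∞)) ≠ ⊤ := by
    refine ENNReal.tsum_coe_ne_top_iff_summable.2 ?_
    exact NNReal.summable_coe.1 (by simpa [coe_nnnorm] using bsCoef_norm_summable η z)
  have hle : (∑' m : ℕ, ∫⁻ x in Set.Ioc (0:ℝ) 1, ‖bsF η z m x‖₊ ∂volume)
      ≤ (∑' m : ℕ, (‖bsCoef η z m‖₊ : ℝ≥0∞)) * ∫⁻ x in Set.Ioc (0:ℝ) 1, ‖bsD η x‖₊ ∂volume := by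
    rw [← ENNReal.tsum_mul_right]
    refine ENNReal.tsum_le_tsum fun m => ?_
    rw [← lintegral_const_mul' _ _ ENNReal.coe_ne_top]
    refine lintegral_mono_ae ?_
    filter_upwards [self_mem_ae_restrict measurableSet_Ioc] with x hx
    have h := bsF_norm_le (η := η) z m hx
    rw [← ENNReal.coe_mul, ENNReal.coe_le_coe, ← nnnorm_mul]
    exact_mod_cast (by rw [norm_mul] at *; exact h : ‖bsF η z m x‖ ≤ ‖bsCoef η z m * bsD η x‖)
  exact (lt_of_le_of_lt hle (ENNReal.mul_lt_top hcoe.lt_top (bsD_lintegral_ne_top hη).lt_top)).ne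

lemma bs_swap (hη : -1 < η.re) (z : ℂ) :
    ∫ x in Set.Ioc (0:ℝ) 1, (∑' m : ℕ, bsF η z m x) ∂volume
      = ∑' m : ℕ, ∫ x in Set.Ioc (0:ℝ) 1, bsF η z m x ∂volume :=
  integral_tsum (fun m => (bsF_integrableOn hη z m).aestronglyMeasurable)
    (bs_lintegral_sum_ne_top hη z)

lemma bs_tsum_eq (z : ℂ) {x : ℝ} (hx : x ∈ Set.Ioo (0:ℝ) 1) :
    ∑' m : ℕ, bsF η z m x = bsKernel η z x := by
  obtain ⟨hx0, hx1⟩ := hx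
  set s : ℝ := Real.sqrt x with hs
  have hxC : (x:ℂ) ≠ 0 := Complex.ofReal_ne_zero.2 hx0.ne'
  have hsq : (x:ℂ) ^ ((1/2 : ℂ)) = ((s:ℝ):ℂ) := by
    rw [show ((1/2:ℂ)) = (((1/2:ℝ)):ℂ) by norm_num, ← Complex.ofReal_cpow hx0.le, hs,
      Real.sqrt_eq_rpow]
  have key : ∀ m : ℕ, (x:ℂ) ^ (((m:ℂ)+1)/2 - 1) = (x:ℂ)^(-(1/2):ℂ) * ((s:ℂ))^m := by
    intro m
    rw [show ((m:ℂ)+1)/2 - 1 = -(1/2) + (m:ℕ) * (1/2 : ℂ) by push_cast; ring,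
      Complex.cpow_add _ _ hxC, Complex.cpow_nat_mul, hsq]
  have hF : ∀ m : ℕ, bsF η z m x
      = bsD η x * ((z*(s:ℂ))^m/(m.factorial:ℂ)
          + (z*(s:ℂ))^m*m/(2*(η+1)*(m.factorial:ℂ))) := by
    intro m
    unfold bsF bsCoef bsD
    rw [key m, show (η+3/2) - 1 = η + 1/2 by ring, mul_pow]
    ring
  rw [tsum_congr hF, tsum_mul_left]
  have hexp : ∀ w : ℂ, Complex.exp w = ∑' n : ℕ, w ^ n / n.factorial := by
    intro w
    rw [Complex.exp_eq_exp_ℂ, NormedSpace.exp_eq_tsum_div]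
  have hsum1 : Summable (fun m : ℕ => (z*(s:ℂ))^m/(m.factorial:ℂ)) := by
    apply Summable.of_norm
    simpa [norm_div, norm_pow, Complex.norm_natCast] using
      Real.summable_pow_div_factorial ‖z*(s:ℂ)‖
  have hsum2 : Summable (fun m : ℕ => (z*(s:ℂ))^m*m/(2*(η+1)*(m.factorial:ℂ))) := by
    apply Summable.of_norm
    exact (bs_summable_aux η ‖z*(s:ℂ)‖).congr fun m => (bsCoef_norm_eq η (z*(s:ℂ)) m).symm
  rw [hsum1.tsum_add hsum2, ← hexp (z*(s:ℂ))]
  have hb : (∑' m : ℕ, (z*(s:ℂ))^m*m/(2*(η+1)*(m.factorial:ℂ)))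
      = z*(s:ℂ)/(2*(η+1)) * Complex.exp (z*(s:ℂ)) := by
    rw [hsum2.tsum_eq_zero_add]
    have hzero : (z*(s:ℂ))^0*(0:ℕ)/(2*(η+1)*((Nat.factorial 0 : ℕ):ℂ)) = 0 := by
      simp
    rw [hzero, zero_add]
    have hstep : ∀ n : ℕ, (z*(s:ℂ))^(n+1)*((n+1:ℕ):ℂ)/(2*(η+1)*(((n+1).factorial : ℕ):ℂ))
        = (z*(s:ℂ)/(2*(η+1))) * ((z*(s:ℂ))^n/(n.factorial:ℂ)) := by
      intro n
      rcases eq_or_ne (η+1) 0 with h|h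
      · simp [h]
      · have hf : ((n.factorial:ℂ)) ≠ 0 := Nat.cast_ne_zero.2 n.factorial_ne_zero
        have hn : ((n:ℂ)+1) ≠ 0 := Nat.cast_add_one_ne_zero n
        rw [Nat.factorial_succ]
        push_cast
        field_simp
        ring
    rw [tsum_congr hstep, tsum_mul_left, ← hexp]
  rw [hb]
  unfold bsKernel
  rw [← hs]
  ring

lemma bs_rep (hη : -1 < η.re) (z : ℂ) :
    besselStruve η z = bsK η * ∫ x in Set.Ioc (0:ℝ) 1, bsKernel η z x ∂volume := by
  unfold besselStruve
  rw [← tsum_mul_left]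
  rw [tsum_congr (bs_termwise hη z)]
  have hval : ∀ m : ℕ, ∫ x in Set.Ioc (0:ℝ) 1, bsF η z m x ∂volume
      = bsCoef η z m *
        (Gamma (((m:ℂ)+1)/2) * Gamma (η + 3/2) / Gamma ((((m:ℂ)+1)/2) + (η + 3/2))) := by
    intro m
    have hGuv : Gamma ((((m:ℂ)+1)/2) + (η + 3/2)) ≠ 0 := by
      apply Gamma_ne_zero_of_re_pos
      have h2 : (((m:ℂ)+1)/2) + (η + 3/2) = ((((m:ℝ)+1)/2 + 3/2 : ℝ) : ℂ) + η := by
        push_cast; ring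
      rw [h2]
      simp only [Complex.add_re, Complex.ofReal_re]
      have : (0:ℝ) ≤ (m:ℝ) := Nat.cast_nonneg m
      have h3 : (0:ℝ) ≤ ((m:ℝ)+1)/2 := by positivity
      linarith
    have hbeta := Complex.Gamma_mul_Gamma_eq_betaIntegral (bs_hu m) (bs_hv hη)
    have hbeta' : Complex.betaIntegral (((m:ℂ)+1)/2) (η + 3/2)
        = Gamma (((m:ℂ)+1)/2) * Gamma (η + 3/2) / Gamma ((((m:ℂ)+1)/2) + (η + 3/2)) := by
      rw [eq_div_iff hGuv, hbeta]
      ring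
    have hIoc : Complex.betaIntegral (((m:ℂ)+1)/2) (η + 3/2)
        = ∫ x in Set.Ioc (0:ℝ) 1,
            (x:ℂ) ^ ((((m:ℂ)+1)/2) - 1) * ((1:ℂ) - x) ^ ((η + 3/2) - 1) ∂volume := by
      rw [Complex.betaIntegral, intervalIntegral.integral_of_le (by norm_num : (0:ℝ) ≤ 1)]
    unfold bsF
    rw [MeasureTheory.integral_const_mul, ← hIoc, hbeta']
  rw [show (∑' m : ℕ, bsK η * (bsCoef η z m *
        (Gamma (((m:ℂ)+1)/2) * Gamma (η + 3/2) / Gamma ((((m:ℂ)+1)/2) + (η + 3/2)))))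
      = ∑' m : ℕ, bsK η * ∫ x in Set.Ioc (0:ℝ) 1, bsF η z m x ∂volume from
    tsum_congr fun m => by rw [hval m]]
  rw [tsum_mul_left, ← bs_swap hη z]
  congr 1
  rw [integral_Ioc_eq_integral_Ioo, integral_Ioc_eq_integral_Ioo]
  exact setIntegral_congr_fun measurableSet_Ioo fun x hx => bs_tsum_eq z hx

end P3
section P4
open MeasureTheory Complex
open scoped ENNReal

lemma bs_measurable_cpow_const (c : ℂ) : Measurable fun z : ℂ => z ^ c := by
  have h : (fun z : ℂ => z ^ c)
      = fun z => if z = 0 then (if c = 0 then 1 else 0) else Complex.exp (Complex.log z * c) := by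
    funext z; rw [Complex.cpow_def]
  rw [h]
  exact Measurable.ite (measurableSet_singleton (0:ℂ)) measurable_const
    (Complex.measurable_exp.comp (Complex.measurable_log.mul_const c))

lemma bs_meas_z (p : ℂ) : Measurable fun y : ℝ => -p / (y:ℂ) := by
  have h : (fun y : ℝ => -p/(y:ℂ)) = fun y => -p * ((y⁻¹ : ℝ):ℂ) := by
    funext y; rw [div_eq_mul_inv, Complex.ofReal_inv]
  rw [h]
  exact measurable_const.mul (Complex.measurable_ofReal.comp measurable_inv)

lemma bs_meas {η : ℂ} (hη : -1 < η.re) (p : ℂ) :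
    StronglyMeasurable fun y : ℝ => besselStruve η (-p / (y:ℂ)) := by
  have hrep : (fun y : ℝ => besselStruve η (-p / (y:ℂ)))
      = fun y : ℝ => bsK η * ∫ x in Set.Ioc (0:ℝ) 1, bsKernel η (-p/(y:ℂ)) x ∂volume :=
    funext fun y => bs_rep hη _
  rw [hrep]
  have hD : Measurable fun q : ℝ × ℝ => bsD η q.2 := by
    unfold bsD
    exact ((bs_measurable_cpow_const _).comp
        (Complex.measurable_ofReal.comp measurable_snd)).mul
      ((bs_measurable_cpow_const _).comp
        (measurable_const.sub (Complex.measurable_ofReal.comp measurable_snd)))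
  have hzs : Measurable fun q : ℝ × ℝ => (-p/(q.1:ℂ)) * ((Real.sqrt q.2 : ℝ):ℂ) :=
    ((bs_meas_z p).comp measurable_fst).mul
      (Complex.measurable_ofReal.comp (Real.continuous_sqrt.measurable.comp measurable_snd))
  have hjoint : StronglyMeasurable fun q : ℝ × ℝ => bsKernel η (-p/(q.1:ℂ)) q.2 := by
    apply Measurable.stronglyMeasurable
    unfold bsKernel
    exact hD.mul ((measurable_const.add (hzs.div_const _)).mul
      (Complex.measurable_exp.comp hzs))
  exact (hjoint.integral_prod_right').const_mul _

lemma bs_texp_le (t : ℝ) (ht : 0 ≤ t) : t * Real.exp (-t) ≤ 1 := by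
  calc t * Real.exp (-t) ≤ Real.exp t * Real.exp (-t) :=
        mul_le_mul_of_nonneg_right (by linarith [Real.add_one_le_exp t]) (Real.exp_pos _).le
    _ = 1 := by rw [← Real.exp_add]; simp

lemma bs_inner_bound {η : ℂ} (hη : -1 < η.re) {z : ℂ} {R : ℝ} (hR : 0 ≤ R)
    (hzre : z.re ≤ 0) (hz : ‖z‖ ≤ R * (-z.re)) {s : ℝ} (hs : 0 ≤ s) :
    ‖(1 + z * (s:ℂ) / (2*(η+1))) * Complex.exp (z * (s:ℂ))‖ ≤ 1 + R / (2*‖η+1‖) := by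
  have he : η + 1 ≠ 0 := bs_he hη
  have hne : (0:ℝ) < ‖η+1‖ := norm_pos_iff.2 he
  have hre : (z * (s:ℂ)).re = z.re * s := by simp [Complex.mul_re]
  have hexp : ‖Complex.exp (z*(s:ℂ))‖ = Real.exp (z.re * s) := by
    rw [Complex.norm_exp, hre]
  rw [norm_mul, hexp]
  have h1 : ‖1 + z * (s:ℂ)/(2*(η+1))‖ ≤ 1 + ‖z‖ * s / (2*‖η+1‖) := by
    refine (norm_add_le _ _).trans ?_
    rw [norm_one, norm_div, norm_mul, norm_mul]
    rw [Complex.norm_real, Real.norm_eq_abs, _root_.abs_of_nonneg hs,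
      show ‖(2:ℂ)‖ = 2 by norm_num]
  have hexple : Real.exp (z.re * s) ≤ 1 := by
    rw [← Real.exp_zero]
    exact Real.exp_le_exp.2 (mul_nonpos_of_nonpos_of_nonneg hzre hs)
  have hexppos : (0:ℝ) < Real.exp (z.re * s) := Real.exp_pos _
  have hkey : ‖z‖ * s * Real.exp (z.re*s) ≤ R := by
    set t : ℝ := -(z.re * s) with ht
    have ht0 : 0 ≤ t := by rw [ht]; nlinarith
    have h2 : ‖z‖ * s ≤ R * t := by
      rw [ht]
      have := mul_le_mul_of_nonneg_right hz hs
      nlinarith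
    calc ‖z‖ * s * Real.exp (z.re * s) ≤ (R * t) * Real.exp (z.re * s) :=
          mul_le_mul_of_nonneg_right h2 hexppos.le
      _ = R * (t * Real.exp (-t)) := by rw [ht]; ring_nf
      _ ≤ R * 1 := mul_le_mul_of_nonneg_left (bs_texp_le t ht0) hR
      _ = R := mul_one R
  calc ‖1 + z * (s:ℂ)/(2*(η+1))‖ * Real.exp (z.re * s)
      ≤ (1 + ‖z‖ * s / (2*‖η+1‖)) * Real.exp (z.re * s) :=
        mul_le_mul_of_nonneg_right h1 hexppos.le
    _ = Real.exp (z.re*s) + (‖z‖*s*Real.exp (z.re*s))/(2*‖η+1‖) := by ring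
    _ ≤ 1 + R/(2*‖η+1‖) := by
        have hdiv : (‖z‖*s*Real.exp (z.re*s))/(2*‖η+1‖) ≤ R/(2*‖η+1‖) := by
          gcongr
        linarith

lemma bs_bound {η : ℂ} (hη : -1 < η.re) {z : ℂ} {R : ℝ} (hR : 0 ≤ R)
    (hzre : z.re ≤ 0) (hz : ‖z‖ ≤ R*(-z.re)) :
    ‖besselStruve η z‖
      ≤ ‖bsK η‖ * ((1 + R/(2*‖η+1‖)) * ∫ x in Set.Ioc (0:ℝ) 1, ‖bsD η x‖ ∂volume) := by
  rw [bs_rep hη z, norm_mul]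
  refine mul_le_mul_of_nonneg_left ?_ (norm_nonneg _)
  have hint : Integrable (fun x => (1 + R/(2*‖η+1‖)) * ‖bsD η x‖)
      (volume.restrict (Set.Ioc (0:ℝ) 1)) := (bsD_integrableOn hη).norm.const_mul _
  have hb : ∀ᵐ x ∂(volume.restrict (Set.Ioc (0:ℝ) 1)),
      ‖bsKernel η z x‖ ≤ (1 + R/(2*‖η+1‖)) * ‖bsD η x‖ := by
    filter_upwards [self_mem_ae_restrict measurableSet_Ioc] with x _
    unfold bsKernel
    rw [norm_mul, mul_comm]
    exact mul_le_mul_of_nonneg_right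
      (bs_inner_bound hη hR hzre hz (Real.sqrt_nonneg x)) (norm_nonneg _)
  calc ‖∫ x in Set.Ioc (0:ℝ) 1, bsKernel η z x ∂volume‖
      ≤ ∫ x in Set.Ioc (0:ℝ) 1, (1 + R/(2*‖η+1‖)) * ‖bsD η x‖ ∂volume :=
        norm_integral_le_of_norm_le hint hb
    _ = (1 + R/(2*‖η+1‖)) * ∫ x in Set.Ioc (0:ℝ) 1, ‖bsD η x‖ ∂volume :=
        MeasureTheory.integral_const_mul _ _

end P4
section P5
open MeasureTheory Complex
open scoped ENNReal

lemma bs_bound_div {η p : ℂ} (hη : -1 < η.re) (hp : 0 < p.re) {y : ℝ} (hy : 0 < y) :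
    ‖besselStruve η (-p/(y:ℂ))‖
      ≤ ‖bsK η‖ * ((1 + (‖p‖/p.re)/(2*‖η+1‖)) * ∫ x in Set.Ioc (0:ℝ) 1, ‖bsD η x‖ ∂volume) := by
  have hre : (-p/(y:ℂ)).re = -(p.re * y⁻¹) := by
    rw [div_eq_mul_inv, ← Complex.ofReal_inv]
    simp [Complex.mul_re]
  have hiy : (0:ℝ) < y⁻¹ := by positivity
  apply bs_bound hη (by positivity)
  · rw [hre]
    nlinarith
  · rw [hre]
    rw [norm_div, norm_neg, Complex.norm_real, Real.norm_eq_abs, _root_.abs_of_pos hy]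
    have heq : ‖p‖/p.re * (-(-(p.re * y⁻¹))) = ‖p‖ / y := by
      field_simp
    rw [heq]

lemma bs_ofReal_norm_eq_coe_nnnorm (a : ℂ) : ENNReal.ofReal ‖a‖ = (‖a‖₊ : ℝ≥0∞) :=
  ofReal_norm a

theorem extBeta_summation (ξ₁ ξ₂ p q η : ℂ)
    (h1 : 0 < ξ₁.re) (h2 : 0 < ξ₂.re) (hp : 0 < p.re) (hq : 0 < q.re) (hη : -1 < η.re) :
    extBeta η p q ξ₁ ξ₂ = ∑' l : ℕ, extBeta η p q (ξ₁ + l) (ξ₂ + 1) := by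
  classical
  set J : ℝ := ∫ x in Set.Ioc (0:ℝ) 1, ‖bsD η x‖ ∂volume with hJ
  set C₁ : ℝ := ‖bsK η‖ * ((1 + (‖p‖/p.re)/(2*‖η+1‖)) * J) with hC₁
  set C₂ : ℝ := ‖bsK η‖ * ((1 + (‖q‖/q.re)/(2*‖η+1‖)) * J) with hC₂
  have hJ0 : 0 ≤ J := integral_nonneg fun x => norm_nonneg _
  have hne : (0:ℝ) < ‖η+1‖ := norm_pos_iff.2 (bs_he hη)
  have hC₁0 : 0 ≤ C₁ := by
    apply mul_nonneg (norm_nonneg _)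
    apply mul_nonneg _ hJ0
    have : 0 ≤ (‖p‖/p.re)/(2*‖η+1‖) := by positivity
    linarith
  have hC₂0 : 0 ≤ C₂ := by
    apply mul_nonneg (norm_nonneg _)
    apply mul_nonneg _ hJ0
    have : 0 ≤ (‖q‖/q.re)/(2*‖η+1‖) := by positivity
    linarith
  -- the integrand functions
  set A : ℝ → ℂ := fun y => besselStruve η (-p / (y:ℂ)) with hA
  set B : ℝ → ℂ := fun y => besselStruve η (-q / (1 - (y:ℂ))) with hB
  set f : ℝ → ℂ := fun y => (y:ℂ) ^ (ξ₁ - 1) * ((1:ℂ) - (y:ℂ)) ^ (ξ₂ - 1) * A y * B y with hf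
  set g : ℕ → ℝ → ℂ :=
    fun l y => (y:ℂ) ^ (ξ₁ + l - 1) * ((1:ℂ) - (y:ℂ)) ^ (ξ₂ + 1 - 1) * A y * B y with hg
  -- bounds
  have hAb : ∀ y : ℝ, 0 < y → ‖A y‖ ≤ C₁ := fun y hy => bs_bound_div hη hp hy
  have hBb : ∀ y : ℝ, y < 1 → ‖B y‖ ≤ C₂ := by
    intro y hy
    have h1y : (0:ℝ) < 1 - y := by linarith
    have : B y = besselStruve η (-q / ((1 - y : ℝ) : ℂ)) := by
      rw [hB]
      push_cast
      ring_nf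
    rw [this]
    exact bs_bound_div hη hq h1y
  -- measurability
  have hAsm : StronglyMeasurable A := bs_meas hη p
  have hBsm : StronglyMeasurable B := by
    have h := (bs_meas hη q).comp_measurable
      (measurable_const.sub measurable_id : Measurable fun y : ℝ => 1 - y)
    have he : ((fun y : ℝ => besselStruve η (-q / (y:ℂ))) ∘ fun y : ℝ => 1 - y) = B := by
      funext y
      simp only [Function.comp_apply, hB]
      push_cast
      ring_nf
    rw [← he]; exact h
  have hsm : ∀ a b : ℂ, StronglyMeasurable
      (fun y : ℝ => (y:ℂ) ^ a * ((1:ℂ) - (y:ℂ)) ^ b * A y * B y) := by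
    intro a b
    refine ((((Measurable.stronglyMeasurable ?_).mul (Measurable.stronglyMeasurable ?_)).mul
      hAsm).mul hBsm)
    · exact (bs_measurable_cpow_const a).comp Complex.measurable_ofReal
    · exact (bs_measurable_cpow_const b).comp
        (measurable_const.sub Complex.measurable_ofReal)
  -- integrability on Ioo
  have hbeta_int : ∀ a b : ℂ, 0 < a.re → 0 < b.re →
      IntegrableOn (fun y : ℝ => (y:ℂ) ^ (a-1) * ((1:ℂ) - (y:ℂ)) ^ (b-1))
        (Set.Ioo (0:ℝ) 1) volume := by
    intro a b ha hb
    have h := (intervalIntegrable_iff_integrableOn_Ioc_of_le (by norm_num : (0:ℝ) ≤ 1)).1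
      (Complex.betaIntegral_convergent ha hb)
    exact h.mono_set Set.Ioo_subset_Ioc_self
  have hint : ∀ a b : ℂ, 0 < a.re → 0 < b.re →
      IntegrableOn (fun y : ℝ => (y:ℂ) ^ (a-1) * ((1:ℂ) - (y:ℂ)) ^ (b-1) * A y * B y)
        (Set.Ioo (0:ℝ) 1) volume := by
    intro a b ha hb
    refine Integrable.mono' (((hbeta_int a b ha hb).norm.const_mul (C₁ * C₂)))
      ((hsm (a-1) (b-1)).aestronglyMeasurable) ?_
    filter_upwards [self_mem_ae_restrict measurableSet_Ioo] with y hy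
    rw [norm_mul, norm_mul]
    calc ‖(y:ℂ) ^ (a-1) * ((1:ℂ) - (y:ℂ)) ^ (b-1)‖ * ‖A y‖ * ‖B y‖
        ≤ ‖(y:ℂ) ^ (a-1) * ((1:ℂ) - (y:ℂ)) ^ (b-1)‖ * C₁ * C₂ := by
          have h1 := hAb y hy.1
          have h2 := hBb y hy.2
          have hn := norm_nonneg ((y:ℂ) ^ (a-1) * ((1:ℂ) - (y:ℂ)) ^ (b-1))
          have hn3 := norm_nonneg (B y)
          exact mul_le_mul (mul_le_mul_of_nonneg_left h1 hn) h2 hn3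
            (mul_nonneg hn hC₁0)
      _ = C₁ * C₂ * ‖(y:ℂ) ^ (a-1) * ((1:ℂ) - (y:ℂ)) ^ (b-1)‖ := by ring
  have hl_re : ∀ l : ℕ, 0 < (ξ₁ + l).re := by
    intro l
    simp only [Complex.add_re, Complex.natCast_re]
    have : (0:ℝ) ≤ l := Nat.cast_nonneg l
    linarith
  have h21 : 0 < (ξ₂ + 1).re := by
    simp only [Complex.add_re, Complex.one_re]
    linarith
  have hintf : IntegrableOn f (Set.Ioo (0:ℝ) 1) volume := by
    rw [hf]; exact hint ξ₁ ξ₂ h1 h2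
  have hintg : ∀ l : ℕ, IntegrableOn (g l) (Set.Ioo (0:ℝ) 1) volume := by
    intro l
    have := hint (ξ₁ + l) (ξ₂ + 1) (hl_re l) h21
    rw [hg]
    exact this
  -- pointwise factorization
  have hfact : ∀ l : ℕ, ∀ y : ℝ, y ∈ Set.Ioo (0:ℝ) 1 →
      g l y = (y:ℂ)^l * (((1:ℂ) - (y:ℂ)) * f y) := by
    intro l y hy
    have hyC : (y:ℂ) ≠ 0 := Complex.ofReal_ne_zero.2 hy.1.ne'
    have h1yC : (1:ℂ) - (y:ℂ) ≠ 0 := by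
      rw [show (1:ℂ) - (y:ℂ) = ((1 - y : ℝ) : ℂ) by push_cast; ring]
      exact Complex.ofReal_ne_zero.2 (by linarith [hy.2])
    rw [hg, hf]
    simp only
    rw [show ξ₁ + l - 1 = (ξ₁ - 1) + l by ring, Complex.cpow_add _ _ hyC,
      Complex.cpow_natCast, show ξ₂ + 1 - 1 = (ξ₂ - 1) + 1 by ring,
      Complex.cpow_add _ _ h1yC, Complex.cpow_one]
    ring
  have hgeom : ∀ y : ℝ, y ∈ Set.Ioo (0:ℝ) 1 → (∑' l : ℕ, g l y) = f y := by
    intro y hy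
    have h1yC : (1:ℂ) - (y:ℂ) ≠ 0 := by
      rw [show (1:ℂ) - (y:ℂ) = ((1 - y : ℝ) : ℂ) by push_cast; ring]
      exact Complex.ofReal_ne_zero.2 (by linarith [hy.2])
    have hnrm : ‖(y:ℂ)‖ < 1 := by
      rw [Complex.norm_real, Real.norm_eq_abs, _root_.abs_of_pos hy.1]
      exact hy.2
    rw [tsum_congr (fun l => hfact l y hy), tsum_mul_right,
      tsum_geometric_of_norm_lt_one hnrm, ← mul_assoc, inv_mul_cancel₀ h1yC, one_mul]
  -- the lintegral condition
  have hpt : ∀ y : ℝ, y ∈ Set.Ioo (0:ℝ) 1 →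
      (∑' l : ℕ, (‖g l y‖₊ : ℝ≥0∞)) = (‖f y‖₊ : ℝ≥0∞) := by
    intro y hy
    have h1y : (0:ℝ) < 1 - y := by linarith [hy.2]
    have hng : ∀ l : ℕ, (‖g l y‖₊ : ℝ≥0∞)
        = (ENNReal.ofReal y)^l * ENNReal.ofReal ((1-y) * ‖f y‖) := by
      intro l
      rw [hfact l y hy, ← bs_ofReal_norm_eq_coe_nnnorm, norm_mul, norm_pow,
        Complex.norm_real, Real.norm_eq_abs, _root_.abs_of_pos hy.1,
        ENNReal.ofReal_mul (pow_nonneg hy.1.le l), ENNReal.ofReal_pow hy.1.le]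
      congr 2
      rw [norm_mul, show (1:ℂ) - (y:ℂ) = ((1 - y : ℝ) : ℂ) by push_cast; ring,
        Complex.norm_real, Real.norm_eq_abs, _root_.abs_of_pos h1y]
    rw [tsum_congr hng, ENNReal.tsum_mul_right, ENNReal.tsum_geometric,
      show (1 : ℝ≥0∞) - ENNReal.ofReal y = ENNReal.ofReal (1-y) by
        rw [ENNReal.ofReal_sub 1 hy.1.le, ENNReal.ofReal_one],
      ENNReal.ofReal_mul h1y.le, ← mul_assoc,
      ENNReal.inv_mul_cancel (by simpa using (ENNReal.ofReal_pos.2 h1y).ne')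
        ENNReal.ofReal_ne_top,
      one_mul, bs_ofReal_norm_eq_coe_nnnorm]
  have hlint : (∑' l : ℕ, ∫⁻ y in Set.Ioo (0:ℝ) 1, ‖g l y‖₊ ∂volume) ≠ ⊤ := by
    have hmeas : ∀ l : ℕ, AEMeasurable (fun y => (‖g l y‖₊ : ℝ≥0∞))
        (volume.restrict (Set.Ioo (0:ℝ) 1)) := fun l =>
      (((hsm (ξ₁ + l - 1) (ξ₂ + 1 - 1)).aestronglyMeasurable
        (μ := volume.restrict (Set.Ioo (0:ℝ) 1))).enorm)
    rw [← lintegral_tsum hmeas]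
    rw [setLIntegral_congr_fun measurableSet_Ioo hpt]
    exact (hintf.2).ne
  -- main computation
  have hswap : ∫ y in Set.Ioo (0:ℝ) 1, (∑' l : ℕ, g l y) ∂volume
      = ∑' l : ℕ, ∫ y in Set.Ioo (0:ℝ) 1, g l y ∂volume :=
    integral_tsum (fun l => (hsm (ξ₁ + l - 1) (ξ₂ + 1 - 1)).aestronglyMeasurable) hlint
  have hL : extBeta η p q ξ₁ ξ₂ = ∫ y in Set.Ioo (0:ℝ) 1, f y ∂volume := by
    rw [extBeta, intervalIntegral.integral_of_le (by norm_num : (0:ℝ) ≤ 1),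
      integral_Ioc_eq_integral_Ioo]
  have hR : ∀ l : ℕ, extBeta η p q (ξ₁ + l) (ξ₂ + 1)
      = ∫ y in Set.Ioo (0:ℝ) 1, g l y ∂volume := by
    intro l
    rw [extBeta, intervalIntegral.integral_of_le (by norm_num : (0:ℝ) ≤ 1),
      integral_Ioc_eq_integral_Ioo]
  rw [hL, tsum_congr hR, ← hswap]
  exact setIntegral_congr_fun measurableSet_Ioo fun y hy => (hgeom y hy).symm

end P5
end

section
/- For all k ∈ ℕ and all complex ξ₂, ξ₃, p, q, η with Re(ξ₃) > Re(ξ₂) > 0, Re(p) > 0, Re(q) > 0 and Re(η) > -1, the k-th derivative with respect to x of the extended confluent hypergeometric function satisfies d^k/dx^k [Φ_η^{p,q}(ξ₂;ξ₃;x)] = ((ξ₂)_k / (ξ₃)_k) · Φ_η^{p,q}(ξ₂+k; ξ₃+k; x), where (a)_k denotes the Pochhammer symbol. -/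
open MeasureTheory Complex

lemma extBeta_bound (η p q a b : ℂ) :
    ∃ C : ℝ, 0 ≤ C ∧ ∀ l : ℕ, ‖extBeta η p q (a + l) b‖ ≤ C := by
  classical
  set f : ℕ → ℝ → ℂ := fun l y =>
    (y : ℂ) ^ (a + l - 1) * ((1 : ℂ) - (y : ℂ)) ^ (b - 1) *
      besselStruve η (-p / (y : ℂ)) * besselStruve η (-q / (1 - (y : ℂ))) with hf
  have hext : ∀ l : ℕ, extBeta η p q (a + l) b = ∫ y in (0:ℝ)..1, f l y := fun l => rfl
  by_cases hA : ∃ l₀ : ℕ, IntervalIntegrable (f l₀) volume 0 1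
  · set l₀ := Nat.find hA with hl₀def
    have hl₀ : IntervalIntegrable (f l₀) volume 0 1 := Nat.find_spec hA
    refine ⟨∫ y in (0:ℝ)..1, ‖f l₀ y‖, intervalIntegral.integral_nonneg (by norm_num)
      (fun y _ => norm_nonneg _), fun l => ?_⟩
    rcases lt_or_ge l l₀ with hl | hl
    · rw [hext l, intervalIntegral.integral_undef (Nat.find_min hA hl)]
      simpa using intervalIntegral.integral_nonneg (by norm_num : (0:ℝ) ≤ 1)
        (fun y _ => norm_nonneg (f l₀ y))
    · -- for l ≥ l₀ : f l y = f l₀ y * y^(l-l₀) on (0,1]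
      have heq : Set.EqOn (fun y : ℝ => f l₀ y * (y : ℂ) ^ (l - l₀)) (f l) (Set.Ioc 0 1) := by
        intro y hy
        have hy0 : (y : ℂ) ≠ 0 := by
          exact_mod_cast ne_of_gt hy.1
        simp only [hf]
        have : (y : ℂ) ^ (a + l - 1) = (y : ℂ) ^ (a + l₀ - 1) * (y : ℂ) ^ (l - l₀) := by
          rw [← Complex.cpow_natCast (y:ℂ) (l - l₀), ← Complex.cpow_add _ _ hy0]
          congr 1
          push_cast [Nat.cast_sub hl]
          ring
        rw [this]; ring
      have hbnd : ∀ᵐ t ∂(volume.restrict (Set.uIoc (0:ℝ) 1)), ‖f l t‖ ≤ ‖f l₀ t‖ := by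
        rw [Set.uIoc_of_le (by norm_num : (0:ℝ) ≤ 1)]
        filter_upwards [ae_restrict_mem measurableSet_Ioc] with t ht
        rw [← heq ht]
        rw [norm_mul]
        have h1 : ‖(t : ℂ) ^ (l - l₀)‖ ≤ 1 := by
          rw [norm_pow, Complex.norm_real, Real.norm_eq_abs]
          exact pow_le_one₀ (abs_nonneg _) (by rw [abs_of_pos ht.1]; exact ht.2)
        calc ‖f l₀ t‖ * ‖(t:ℂ) ^ (l - l₀)‖ ≤ ‖f l₀ t‖ * 1 :=
              mul_le_mul_of_nonneg_left h1 (norm_nonneg _)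
          _ = ‖f l₀ t‖ := mul_one _
      have hnormint : IntervalIntegrable (fun y => ‖f l₀ y‖) volume 0 1 := hl₀.norm
      have := (intervalIntegral.norm_integral_le_of_norm_le (by norm_num : (0:ℝ) ≤ 1)
        ((ae_restrict_iff' measurableSet_Ioc).mp
          (by rwa [Set.uIoc_of_le (by norm_num : (0:ℝ) ≤ 1)] at hbnd)) hnormint).trans
        (le_abs_self _)
      rw [hext l]
      refine this.trans (le_of_eq ?_)
      exact _root_.abs_of_nonneg (intervalIntegral.integral_nonneg (by norm_num)
        (fun y _ => norm_nonneg _))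
  · refine ⟨0, le_refl 0, fun l => ?_⟩
    rw [hext l, intervalIntegral.integral_undef (fun h => hA ⟨l, h⟩)]
    simp

lemma hasDerivAt_tsum_pow {A : ℕ → ℂ} {C : ℝ} (hC : ∀ l : ℕ, ‖A l‖ ≤ C / l.factorial)
    (x : ℂ) :
    HasDerivAt (fun z : ℂ => ∑' l : ℕ, A l * z ^ l)
      (∑' l : ℕ, A (l + 1) * (l + 1) * x ^ l) x := by
  have hC0 : 0 ≤ C := by
    have := (norm_nonneg (A 0)).trans (hC 0)
    simpa using this
  set R : ℝ := ‖x‖ + 1 with hR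
  have hR1 : 1 ≤ R := by { rw [hR]; linarith [norm_nonneg x] }
  have hR0 : 0 < R := by positivity
  set u : ℕ → ℝ := fun n => C * ((2 * R) ^ n / n.factorial) with hu
  have husum : Summable u := (Real.summable_pow_div_factorial (2 * R)).mul_left C
  have key : ∀ (n : ℕ) (y : ℂ), ‖y‖ ≤ R → ‖A n * (n * y ^ (n - 1))‖ ≤ u n := by
    intro n y hy
    have h1 : (n : ℝ) * ‖y‖ ^ (n - 1) ≤ (2 * R) ^ n := by
      have hn2 : (n : ℝ) ≤ 2 ^ n := by exact_mod_cast (Nat.lt_two_pow_self (n := n)).le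
      have hyR : ‖y‖ ^ (n - 1) ≤ R ^ (n - 1) :=
        pow_le_pow_left₀ (norm_nonneg _) hy _
      have hRR : R ^ (n - 1) ≤ R ^ n :=
        pow_le_pow_right₀ hR1 (Nat.sub_le n 1)
      calc (n : ℝ) * ‖y‖ ^ (n - 1) ≤ 2 ^ n * R ^ n := by
            apply mul_le_mul hn2 (hyR.trans hRR) (by positivity) (by positivity)
        _ = (2 * R) ^ n := (mul_pow 2 R n).symm
    calc ‖A n * (n * y ^ (n - 1))‖ = ‖A n‖ * ((n : ℝ) * ‖y‖ ^ (n - 1)) := by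
          rw [norm_mul, norm_mul, norm_pow]
          norm_num
      _ ≤ (C / n.factorial) * (2 * R) ^ n := by
          apply mul_le_mul (hC n) h1 (by positivity) (by positivity)
      _ = u n := by rw [hu]; ring
  have hsum0 : Summable fun n : ℕ => A n * x ^ n := by
    apply Summable.of_norm_bounded husum
    intro n
    rw [norm_mul, norm_pow]
    calc ‖A n‖ * ‖x‖ ^ n ≤ (C / n.factorial) * (2 * R) ^ n := by
          apply mul_le_mul (hC n) ?_ (by positivity) (by positivity)
          apply pow_le_pow_left₀ (norm_nonneg _)
          nlinarith [norm_nonneg x]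
      _ = u n := by rw [hu]; ring
  have hder : HasDerivAt (fun z : ℂ => ∑' l : ℕ, A l * z ^ l)
      (∑' n : ℕ, A n * (n * x ^ (n - 1))) x := by
    apply hasDerivAt_tsum_of_isPreconnected husum Metric.isOpen_ball
      (convex_ball (0:ℂ) R).isPreconnected
      (fun n y _ => (hasDerivAt_pow n y).const_mul (A n))
      (fun n y hy => key n y (le_of_lt (mem_ball_zero_iff.mp hy)))
      (mem_ball_zero_iff.mpr (by simp [hR])) hsum0
      (mem_ball_zero_iff.mpr (by simp [hR]))
  have hsum' : Summable fun n : ℕ => A n * (n * x ^ (n - 1)) :=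
    Summable.of_norm_bounded husum fun n => key n x (by simp [hR])
  have hre : (∑' n : ℕ, A n * (n * x ^ (n - 1))) = ∑' l : ℕ, A (l + 1) * (l + 1) * x ^ l := by
    rw [hsum'.tsum_eq_zero_add]
    simp only [Nat.cast_zero, zero_mul, mul_zero, zero_add, Nat.add_sub_cancel]
    apply tsum_congr
    intro n
    push_cast
    ring
  rwa [hre] at hder

lemma betaIntegral_eq_Gamma (a b : ℂ) (ha : 0 < a.re) (hab : a.re < b.re) :
    Complex.betaIntegral a (b - a) =
      Complex.Gamma a * Complex.Gamma (b - a) / Complex.Gamma b := by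
  have hba : 0 < (b - a).re := by rw [Complex.sub_re]; linarith
  have hΓb : Complex.Gamma b ≠ 0 :=
    Complex.Gamma_ne_zero_of_re_pos (lt_trans ha hab)
  have h := Complex.Gamma_mul_Gamma_eq_betaIntegral ha hba
  have h2 : a + (b - a) = b := by ring
  rw [h2] at h
  rw [h, mul_div_cancel_left₀ _ hΓb]

lemma extPhi_deriv (η p q a b : ℂ) (ha : 0 < a.re) (hab : a.re < b.re) (x : ℂ) :
    deriv (fun z => extPhi η p q a b z) x = (a / b) * extPhi η p q (a + 1) (b + 1) x := by
  have hb : 0 < b.re := lt_trans ha hab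
  have hba : 0 < (b - a).re := by rw [Complex.sub_re]; linarith
  have ha0 : a ≠ 0 := fun h => by rw [h] at ha; simp at ha
  have hb0 : b ≠ 0 := fun h => by rw [h] at hb; simp at hb
  have hΓa : Complex.Gamma a ≠ 0 := Complex.Gamma_ne_zero_of_re_pos ha
  have hΓb : Complex.Gamma b ≠ 0 := Complex.Gamma_ne_zero_of_re_pos hb
  have hΓba : Complex.Gamma (b - a) ≠ 0 := Complex.Gamma_ne_zero_of_re_pos hba
  have ha1 : 0 < (a + 1).re := by rw [Complex.add_re, Complex.one_re]; linarith
  have hab1 : (a + 1).re < (b + 1).re := by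
    rw [Complex.add_re, Complex.add_re, Complex.one_re]; linarith
  have hBeq := betaIntegral_eq_Gamma a b ha hab
  have hB'eq := betaIntegral_eq_Gamma (a + 1) (b + 1) ha1 hab1
  have hsub : b + 1 - (a + 1) = b - a := by ring
  rw [hsub] at hB'eq
  set B : ℂ := Complex.betaIntegral a (b - a) with hB
  have hBne : B ≠ 0 := by
    rw [hBeq]
    exact div_ne_zero (mul_ne_zero hΓa hΓba) hΓb
  have hBpos : 0 < ‖B‖ := norm_pos_iff.mpr hBne
  obtain ⟨C, hC0, hC⟩ := extBeta_bound η p q a (b - a)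
  set A : ℕ → ℂ := fun l => extBeta η p q (a + l) (b - a) / (B * l.factorial) with hA
  have hAbnd : ∀ l : ℕ, ‖A l‖ ≤ (C / ‖B‖) / l.factorial := by
    intro l
    have hfac : (0:ℝ) < l.factorial := by exact_mod_cast l.factorial_pos
    rw [hA]
    simp only []
    rw [norm_div, norm_mul, Complex.norm_natCast, div_div]
    gcongr
    exact hC l
  have hfun : (fun z => extPhi η p q a b z) = fun z => ∑' l : ℕ, A l * z ^ l := by
    funext z
    simp only [extPhi]
    exact tsum_congr fun l => by rw [hA]; ring
  rw [hfun, (hasDerivAt_tsum_pow hAbnd x).deriv]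
  -- now handle the RHS
  have hsub2 : b + 1 - (a + 1) = b - a := by ring
  simp only [extPhi, hsub2]
  rw [← tsum_mul_left]
  apply tsum_congr
  intro l
  have harg : a + 1 + (l : ℂ) = a + ((l + 1 : ℕ) : ℂ) := by push_cast; ring
  rw [harg]
  rw [hA]
  simp only []
  have hB'B : Complex.betaIntegral (a + 1) (b - a) = a / b * B := by
    rw [hB'eq, hBeq, Complex.Gamma_add_one a ha0, Complex.Gamma_add_one b hb0,
      div_mul_div_comm, mul_assoc]
  rw [hB'B]
  have hfac : ((l + 1).factorial : ℂ) = ((l:ℂ) + 1) * (l.factorial : ℂ) := by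
    rw [Nat.factorial_succ]; push_cast; ring
  rw [hfac]
  have hl0 : ((l:ℂ) + 1) ≠ 0 := Nat.cast_add_one_ne_zero l
  have hlf : ((l.factorial : ℂ)) ≠ 0 := by
    exact_mod_cast Nat.cast_ne_zero.mpr l.factorial_ne_zero
  field_simp

lemma iteratedDeriv_const_mul' (n : ℕ) (c : ℂ) (f : ℂ → ℂ) (x : ℂ) :
    iteratedDeriv n (fun y => c * f y) x = c * iteratedDeriv n f x := by
  induction n generalizing f x with
  | zero => simp
  | succ n ih =>
    rw [iteratedDeriv_succ', iteratedDeriv_succ']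
    have h : (deriv fun y => c * f y) = fun y => c * deriv f y :=
      funext fun y => deriv_const_mul_field c
    rw [h, ih]


theorem extPhi_iteratedDeriv (k : ℕ) (ξ₂ ξ₃ p q η : ℂ)
    (h1 : 0 < ξ₂.re) (h2 : ξ₂.re < ξ₃.re) (hp : 0 < p.re) (hq : 0 < q.re)
    (hη : -1 < η.re) :
    ∀ x : ℂ,
      iteratedDeriv k (fun x => extPhi η p q ξ₂ ξ₃ x) x =
        (poch ξ₂ k / poch ξ₃ k) * extPhi η p q (ξ₂ + k) (ξ₃ + k) x := by
  induction k generalizing ξ₂ ξ₃ with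
  | zero =>
    intro x
    have hΓ2 : Complex.Gamma ξ₂ ≠ 0 := Complex.Gamma_ne_zero_of_re_pos h1
    have hΓ3 : Complex.Gamma ξ₃ ≠ 0 := Complex.Gamma_ne_zero_of_re_pos (lt_trans h1 h2)
    rw [iteratedDeriv_zero]
    simp [poch, div_self hΓ2, div_self hΓ3]
  | succ k ih =>
    intro x
    have h1' : 0 < (ξ₂ + 1).re := by rw [Complex.add_re, Complex.one_re]; linarith
    have h2' : (ξ₂ + 1).re < (ξ₃ + 1).re := by
      rw [Complex.add_re, Complex.add_re, Complex.one_re]; linarith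
    have hd : (deriv fun x => extPhi η p q ξ₂ ξ₃ x) =
        fun x => (ξ₂ / ξ₃) * extPhi η p q (ξ₂ + 1) (ξ₃ + 1) x :=
      funext fun y => extPhi_deriv η p q ξ₂ ξ₃ h1 h2 y
    rw [iteratedDeriv_succ', hd, iteratedDeriv_const_mul', ih (ξ₂ + 1) (ξ₃ + 1) h1' h2' x]
    have e2 : ξ₂ + 1 + (k : ℂ) = ξ₂ + ((k + 1 : ℕ) : ℂ) := by push_cast; ring
    have e3 : ξ₃ + 1 + (k : ℂ) = ξ₃ + ((k + 1 : ℕ) : ℂ) := by push_cast; ring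
    rw [e2, e3]
    have hsc : ξ₂ / ξ₃ * (poch (ξ₂ + 1) k / poch (ξ₃ + 1) k) =
        poch ξ₂ (k + 1) / poch ξ₃ (k + 1) := by
      have h3 : 0 < ξ₃.re := lt_trans h1 h2
      have h20 : ξ₂ ≠ 0 := fun h => by rw [h] at h1; simp at h1
      have h30 : ξ₃ ≠ 0 := fun h => by rw [h] at h3; simp at h3
      have hΓ2 : Complex.Gamma ξ₂ ≠ 0 := Complex.Gamma_ne_zero_of_re_pos h1
      have hΓ3 : Complex.Gamma ξ₃ ≠ 0 := Complex.Gamma_ne_zero_of_re_pos h3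
      have hr2 : Complex.Gamma (ξ₂ + 1 + k) ≠ 0 := by
        apply Complex.Gamma_ne_zero_of_re_pos
        rw [Complex.add_re, Complex.add_re, Complex.one_re, Complex.natCast_re]
        have : (0:ℝ) ≤ k := Nat.cast_nonneg k
        linarith
      have hr3 : Complex.Gamma (ξ₃ + 1 + k) ≠ 0 := by
        apply Complex.Gamma_ne_zero_of_re_pos
        rw [Complex.add_re, Complex.add_re, Complex.one_re, Complex.natCast_re]
        have : (0:ℝ) ≤ k := Nat.cast_nonneg k
        linarith
      simp only [poch]
      rw [← e2, ← e3, Complex.Gamma_add_one ξ₂ h20, Complex.Gamma_add_one ξ₃ h30]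
      field_simp
    rw [← hsc]
    ring
end
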